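/- Assume γ₂ > 0, γ₁ ≠ γ₂, and let Λ₁(t) denote the largest real root of φ(t,·) for large t (so Λ₁(t) → γ₂d₂ as t → ∞). Then the ratio of multiplier symbols along Λ₁ diverges: m¹²(t,Λ₁(t))/m¹¹(t,Λ₁(t)) = (g + γ₂·Λ₁(t) − Λ₁(t)²·t/tanh(t·d₂)) / (−Λ₁(t)·(γ₂d₂ − Λ₁(t))·t/sinh(t·d₂)) tends to +∞ as t → ∞ if γ₂ > γ₁, and tends to −∞ as t → ∞ if γ₂ < γ₁. -/

import Mathlib

open Real Filter Asymptotics Topology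

/-- The coefficient `A(t)` of the dispersion cubic. -/
noncomputable def funA (d₁ d₂ γ₁ γ₂ t : ℝ) : ℝ :=
  -(1 / t) * (γ₂ * (t * d₂ + Real.sinh (t * d₂) * Real.cosh (t * d₁) / Real.cosh (t * (d₁ + d₂)))
    + γ₁ * Real.sinh (t * d₁) * Real.cosh (t * d₂) / Real.cosh (t * (d₁ + d₂)))

/-- The coefficient `B(t)` of the dispersion cubic. -/
noncomputable def funB (d₁ d₂ g γ₁ γ₂ t : ℝ) : ℝ :=
  Real.tanh (t * (d₁ + d₂)) * ((γ₂ ^ 2 * d₂ - g) / t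
    + γ₂ * (γ₁ - γ₂) * Real.sinh (t * d₁) * Real.sinh (t * d₂) /
        (t ^ 2 * Real.sinh (t * (d₁ + d₂))))

/-- The coefficient `C(t)` of the dispersion cubic. -/
noncomputable def funC (d₁ d₂ g γ₁ γ₂ t : ℝ) : ℝ :=
  (g * Real.tanh (t * (d₁ + d₂)) / t ^ 2) *
    ((γ₁ - γ₂) * Real.sinh (t * d₁) * Real.sinh (t * d₂) / Real.sinh (t * (d₁ + d₂))
      + γ₂ * d₂ * t)

/-- The dispersion cubic `φ(t,Λ)`. -/
noncomputable def phi (d₁ d₂ g γ₁ γ₂ t Λ : ℝ) : ℝ :=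
  Λ ^ 3 + funA d₁ d₂ γ₁ γ₂ t * Λ ^ 2 + funB d₁ d₂ g γ₁ γ₂ t * Λ + funC d₁ d₂ g γ₁ γ₂ t

/-- The multiplier symbol `m¹¹(t,Λ)`. -/
noncomputable def m11 (d₂ γ₂ t Λ : ℝ) : ℝ := -2 * Λ * (γ₂ * d₂ - Λ) * t / Real.sinh (t * d₂)

/-- The multiplier symbol `m¹²(t,Λ)`. -/
noncomputable def m12 (d₂ g γ₂ t Λ : ℝ) : ℝ :=
  2 * (g + γ₂ * Λ - Λ ^ 2 * t / Real.tanh (t * d₂))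

/-- The multiplier symbol `m²¹(t,Λ)`. -/
noncomputable def m21 (d₁ d₂ γ₁ γ₂ t Λ : ℝ) : ℝ :=
  γ₂ - γ₁ + (Λ - γ₂ * d₂) * (t / Real.tanh (t * d₁) + t / Real.tanh (t * d₂))

/-- The multiplier symbol `m²²(t,Λ)`. -/
noncomputable def m22 (d₂ t Λ : ℝ) : ℝ := -Λ * t / Real.sinh (t * d₂)

section AuxLemmas

open Topology

private lemma exp_neg_two_mul'' (x : ℝ) :
    Real.exp (-(2*x)) = Real.exp (-x) * Real.exp (-x) := by
  rw [← Real.exp_add]; ring_nf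

private lemma sinh_mul_cosh_div' (x y : ℝ) :
    Real.sinh x * Real.cosh y / Real.cosh (x+y) =
      (1 + Real.exp (-(2*y)) - Real.exp (-(2*x)) - Real.exp (-(2*(x+y)))) /
        (2*(1 + Real.exp (-(2*(x+y))))) := by
  have h1 : (0:ℝ) < 1 + Real.exp (-(2*(x+y))) := by positivity
  rw [Real.sinh_eq, Real.cosh_eq, Real.cosh_eq, exp_neg_two_mul'', exp_neg_two_mul'',
    exp_neg_two_mul'']
  rw [Real.exp_add, neg_add, Real.exp_add]
  have e1 := Real.exp_ne_zero x
  have e2 := Real.exp_ne_zero y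
  have hx : Real.exp (-x) = (Real.exp x)⁻¹ := Real.exp_neg x
  have hy : Real.exp (-y) = (Real.exp y)⁻¹ := Real.exp_neg y
  rw [hx, hy]
  have hcp : (Real.exp x * Real.exp y + (Real.exp x)⁻¹ * (Real.exp y)⁻¹) / 2 ≠ 0 := by
    have := Real.cosh_pos (x+y)
    rw [Real.cosh_eq, Real.exp_add, neg_add, Real.exp_add, hx, hy] at this
    exact this.ne'
  field_simp
  ring

private lemma sinh_mul_sinh_div' {x y : ℝ} (hxy : 0 < x + y) :
    Real.sinh x * Real.sinh y / Real.sinh (x+y) =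
      (1 - Real.exp (-(2*y)) - Real.exp (-(2*x)) + Real.exp (-(2*(x+y)))) /
        (2*(1 - Real.exp (-(2*(x+y))))) := by
  have h1 : Real.exp (-(x+y)) < 1 := by
    rw [Real.exp_lt_one_iff]; linarith
  have h1' : (0:ℝ) < Real.exp (-(x+y)) := Real.exp_pos _
  have hc : Real.exp (x+y) - Real.exp (-(x+y)) ≠ 0 := by
    have := Real.sinh_pos_iff.2 hxy
    rw [Real.sinh_eq] at this
    intro h; rw [h] at this; norm_num at this
  have hD : 2*(1 - Real.exp (-(x+y)) * Real.exp (-(x+y))) ≠ 0 := by nlinarith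
  have habc : ∀ a b c : ℝ, a/2*(b/2)/(c/2) = a*b/(2*c) := by
    intro a b c
    rcases eq_or_ne c 0 with h|h
    · simp [h]
    · field_simp
  rw [Real.sinh_eq, Real.sinh_eq, Real.sinh_eq, exp_neg_two_mul'', exp_neg_two_mul'',
    exp_neg_two_mul'', habc, div_eq_div_iff (by intro h; apply hc; linarith) hD]
  have hxy' : Real.exp (x+y) = Real.exp x * Real.exp y := Real.exp_add x y
  have hxy'' : Real.exp (-(x+y)) = Real.exp (-x) * Real.exp (-y) := by
    rw [neg_add, Real.exp_add]
  rw [hxy', hxy'', Real.exp_neg, Real.exp_neg]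
  have e1 := Real.exp_ne_zero x
  have e2 := Real.exp_ne_zero y
  field_simp
  ring

private lemma tanh_eq_exp'' (x : ℝ) :
    Real.tanh x = (1 - Real.exp (-(2*x)))/(1 + Real.exp (-(2*x))) := by
  rw [Real.tanh_eq_sinh_div_cosh, Real.sinh_eq, Real.cosh_eq, exp_neg_two_mul'', Real.exp_neg]
  have e := Real.exp_ne_zero x
  have hc : Real.exp x + (Real.exp x)⁻¹ ≠ 0 := by positivity
  have hd : 1 + (Real.exp x)⁻¹*(Real.exp x)⁻¹ ≠ 0 := by positivity
  field_simp

private lemma elim'' {c : ℝ} (hc : 0 < c) :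
    Tendsto (fun t : ℝ => Real.exp (-(2*(t*c)))) atTop (𝓝 0) := by
  have h1 : Tendsto (fun t : ℝ => t*c) atTop atTop := tendsto_id.atTop_mul_const hc
  have h2 : Tendsto (fun t : ℝ => 2*(t*c)) atTop atTop := h1.const_mul_atTop (by norm_num)
  have h3 : Tendsto (fun t : ℝ => Real.exp (2*(t*c))) atTop atTop := tendsto_exp_atTop.comp h2
  have h4 : (fun t : ℝ => Real.exp (-(2*(t*c)))) = (fun t : ℝ => Real.exp (2*(t*c)))⁻¹ := by
    funext t; simp [Real.exp_neg, Pi.inv_apply]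
  rw [h4]; exact h3.inv_tendsto_atTop

private lemma elim2'' {a b : ℝ} (ha : 0 < a) (hb : 0 < b) :
    Tendsto (fun t : ℝ => Real.exp (-(2*(t*a+t*b)))) atTop (𝓝 0) := by
  have := elim'' (show 0 < a + b by linarith)
  simpa [mul_add] using this

private lemma tanh_lim' {c : ℝ} (hc : 0 < c) :
    Tendsto (fun t : ℝ => Real.tanh (t*c)) atTop (𝓝 1) := by
  simp only [tanh_eq_exp'']
  have h := elim'' hc
  have : Tendsto (fun t : ℝ => (1 - Real.exp (-(2*(t*c))))/(1 + Real.exp (-(2*(t*c)))))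
      atTop (𝓝 ((1-0)/(1+0))) :=
    Tendsto.div ((tendsto_const_nhds).sub h) ((tendsto_const_nhds).add h) (by norm_num)
  simpa using this

private lemma P_lim' {a b c : ℝ} (ha : 0 < a) (hb : 0 < b) (hc : a + b = c) :
    Tendsto (fun t : ℝ => Real.sinh (t*a) * Real.cosh (t*b) / Real.cosh (t*c))
      atTop (𝓝 (1/2)) := by
  subst hc
  have key : ∀ t : ℝ, Real.sinh (t*a) * Real.cosh (t*b) / Real.cosh (t*(a+b)) =
      (1 + Real.exp (-(2*(t*b))) - Real.exp (-(2*(t*a))) - Real.exp (-(2*(t*a+t*b)))) /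
        (2*(1 + Real.exp (-(2*(t*a+t*b))))) := by
    intro t
    have := sinh_mul_cosh_div' (t*a) (t*b)
    rw [mul_add]
    exact this
  simp only [key]
  have h : Tendsto (fun t : ℝ =>
      (1 + Real.exp (-(2*(t*b))) - Real.exp (-(2*(t*a))) - Real.exp (-(2*(t*a+t*b)))) /
        (2*(1 + Real.exp (-(2*(t*a+t*b)))))) atTop (𝓝 ((1+0-0-0)/(2*(1+0)))) :=
    Tendsto.div
      (((tendsto_const_nhds.add (elim'' hb)).sub (elim'' ha)).sub (elim2'' ha hb))
      (tendsto_const_nhds.mul (tendsto_const_nhds.add (elim2'' ha hb)))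
      (by norm_num)
  simpa using h

private lemma S_lim' {a b c : ℝ} (ha : 0 < a) (hb : 0 < b) (hc : a + b = c) :
    Tendsto (fun t : ℝ => Real.sinh (t*a) * Real.sinh (t*b) / Real.sinh (t*c))
      atTop (𝓝 (1/2)) := by
  subst hc
  have key : ∀ᶠ t : ℝ in atTop, Real.sinh (t*a) * Real.sinh (t*b) / Real.sinh (t*(a+b)) =
      (1 - Real.exp (-(2*(t*b))) - Real.exp (-(2*(t*a))) + Real.exp (-(2*(t*a+t*b)))) /
        (2*(1 - Real.exp (-(2*(t*a+t*b))))) := by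
    filter_upwards [eventually_gt_atTop (0:ℝ)] with t ht
    have hpos : 0 < t*a + t*b := by positivity
    have := sinh_mul_sinh_div' hpos
    rw [mul_add]
    exact this
  have h : Tendsto (fun t : ℝ =>
      (1 - Real.exp (-(2*(t*b))) - Real.exp (-(2*(t*a))) + Real.exp (-(2*(t*a+t*b)))) /
        (2*(1 - Real.exp (-(2*(t*a+t*b)))))) atTop (𝓝 ((1-0-0+0)/(2*(1-0)))) :=
    Tendsto.div
      (((tendsto_const_nhds.sub (elim'' hb)).sub (elim'' ha)).add (elim2'' ha hb))
      (tendsto_const_nhds.mul (tendsto_const_nhds.sub (elim2'' ha hb)))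
      (by norm_num)
  apply Tendsto.congr' (key.mono fun t ht => ht.symm)
  simpa using h

private lemma sinh_atTop' {c : ℝ} (hc : 0 < c) :
    Tendsto (fun t : ℝ => Real.sinh (t*c)) atTop atTop := by
  apply tendsto_atTop_mono' atTop
    (show (fun t : ℝ => (Real.exp (t*c) + (-1))/2) ≤ᶠ[atTop] fun t => Real.sinh (t*c) from ?_)
  · have h1 : Tendsto (fun t : ℝ => t*c) atTop atTop := tendsto_id.atTop_mul_const hc
    have h2 := tendsto_exp_atTop.comp h1
    exact (tendsto_atTop_add_const_right _ (-1) h2).atTop_div_const (by norm_num)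
  · filter_upwards [eventually_ge_atTop (0:ℝ)] with t ht
    rw [Real.sinh_eq]
    have h1 : Real.exp (-(t*c)) ≤ 1 := Real.exp_le_one_iff.2 (by nlinarith)
    have h2 : (0:ℝ) < Real.exp (-(t*c)) := Real.exp_pos _
    nlinarith

private lemma Feq' (d₁ d₂ g γ₁ γ₂ t : ℝ) (hd₁ : 0 < d₁) (hd₂ : 0 < d₂) (ht : 0 < t) :
    t * phi d₁ d₂ g γ₁ γ₂ t (γ₂*d₂) =
      -(γ₂*d₂)^2*(γ₂ * (Real.sinh (t*d₂)*Real.cosh (t*d₁)/Real.cosh (t*(d₁+d₂)))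
        + γ₁ * (Real.sinh (t*d₁)*Real.cosh (t*d₂)/Real.cosh (t*(d₁+d₂))))
      + Real.tanh (t*(d₁+d₂)) * ((γ₂^2*d₂ - g)*(γ₂*d₂)
        + γ₂*(γ₁-γ₂)*(Real.sinh (t*d₁)*Real.sinh (t*d₂)/Real.sinh (t*(d₁+d₂)))/t*(γ₂*d₂))
      + g * Real.tanh (t*(d₁+d₂)) *
        ((γ₁-γ₂)*(Real.sinh (t*d₁)*Real.sinh (t*d₂)/Real.sinh (t*(d₁+d₂)))/t + γ₂*d₂) := by
  have hc : Real.cosh (t*(d₁+d₂)) ≠ 0 := (Real.cosh_pos _).ne'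
  have hs : Real.sinh (t*(d₁+d₂)) ≠ 0 := by
    have : 0 < t*(d₁+d₂) := by positivity
    exact (Real.sinh_pos_iff.2 this).ne'
  unfold phi funA funB funC
  field_simp
  ring

end AuxLemmas

/-- along the largest root `Λ₁`, the ratio `m¹²/m¹¹` diverges to
`+∞` if `γ₂ > γ₁` and to `−∞` if `γ₂ < γ₁`. -/
theorem ratio_m12_m11_diverges
    (d₁ d₂ g γ₁ γ₂ : ℝ) (hd₁ : 0 < d₁) (hd₂ : 0 < d₂) (hg : 0 < g)
    (hγ₂ : 0 < γ₂) (hne : γ₁ ≠ γ₂) (Λ₁ Λ₂ Λ₃ : ℝ → ℝ)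
    (hroots : ∀ᶠ t in atTop,
      Λ₃ t < Λ₂ t ∧ Λ₂ t < Λ₁ t ∧
      ∀ Λ : ℝ, phi d₁ d₂ g γ₁ γ₂ t Λ = (Λ - Λ₁ t) * (Λ - Λ₂ t) * (Λ - Λ₃ t))
    (hlim1 : Tendsto Λ₁ atTop (nhds (γ₂ * d₂)))
    (hlim2 : Tendsto Λ₂ atTop (nhds 0))
    (hlim3 : Tendsto Λ₃ atTop (nhds 0)) :
    (γ₁ < γ₂ →
      Tendsto (fun t : ℝ => m12 d₂ g γ₂ t (Λ₁ t) / m11 d₂ γ₂ t (Λ₁ t)) atTop atTop) ∧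
    (γ₂ < γ₁ →
      Tendsto (fun t : ℝ => m12 d₂ g γ₂ t (Λ₁ t) / m11 d₂ γ₂ t (Λ₁ t)) atTop atBot) := by
  have hΛs : (0:ℝ) < γ₂ * d₂ := by positivity
  have hγne : γ₂ - γ₁ ≠ 0 := sub_ne_zero.2 (Ne.symm hne)
  -- limits of the hyperbolic building blocks
  have htanh : Tendsto (fun t : ℝ => Real.tanh (t*(d₁+d₂))) atTop (𝓝 1) :=
    tanh_lim' (by linarith)
  have htanh2 : Tendsto (fun t : ℝ => Real.tanh (t*d₂)) atTop (𝓝 1) := tanh_lim' hd₂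
  have hP₁ : Tendsto (fun t : ℝ =>
      Real.sinh (t*d₂)*Real.cosh (t*d₁)/Real.cosh (t*(d₁+d₂))) atTop (𝓝 (1/2)) :=
    P_lim' hd₂ hd₁ (by ring)
  have hP₂ : Tendsto (fun t : ℝ =>
      Real.sinh (t*d₁)*Real.cosh (t*d₂)/Real.cosh (t*(d₁+d₂))) atTop (𝓝 (1/2)) :=
    P_lim' hd₁ hd₂ rfl
  have hS : Tendsto (fun t : ℝ =>
      Real.sinh (t*d₁)*Real.sinh (t*d₂)/Real.sinh (t*(d₁+d₂))) atTop (𝓝 (1/2)) :=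
    S_lim' hd₁ hd₂ rfl
  -- limit of F t = t * φ(t, γ₂ d₂)
  set F : ℝ → ℝ := fun t => t * phi d₁ d₂ g γ₁ γ₂ t (γ₂*d₂) with hFdef
  have hFlim : Tendsto F atTop (𝓝 ((γ₂-γ₁)*(γ₂*d₂)^2/2)) := by
    have hE : Tendsto (fun t : ℝ =>
        -(γ₂*d₂)^2*(γ₂ * (Real.sinh (t*d₂)*Real.cosh (t*d₁)/Real.cosh (t*(d₁+d₂)))
          + γ₁ * (Real.sinh (t*d₁)*Real.cosh (t*d₂)/Real.cosh (t*(d₁+d₂))))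
        + Real.tanh (t*(d₁+d₂)) * ((γ₂^2*d₂ - g)*(γ₂*d₂)
          + γ₂*(γ₁-γ₂)*(Real.sinh (t*d₁)*Real.sinh (t*d₂)/Real.sinh (t*(d₁+d₂)))/t*(γ₂*d₂))
        + g * Real.tanh (t*(d₁+d₂)) *
          ((γ₁-γ₂)*(Real.sinh (t*d₁)*Real.sinh (t*d₂)/Real.sinh (t*(d₁+d₂)))/t + γ₂*d₂))
        atTop (𝓝 (-(γ₂*d₂)^2*(γ₂*(1/2) + γ₁*(1/2))
          + 1*((γ₂^2*d₂ - g)*(γ₂*d₂) + 0*(γ₂*d₂))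
          + g*1*(0 + γ₂*d₂))) := by
      refine Tendsto.add (Tendsto.add ?_ ?_) ?_
      · exact tendsto_const_nhds.mul
          ((tendsto_const_nhds.mul hP₁).add (tendsto_const_nhds.mul hP₂))
      · exact htanh.mul (tendsto_const_nhds.add
          (((tendsto_const_nhds.mul hS).div_atTop tendsto_id).mul tendsto_const_nhds))
      · exact (tendsto_const_nhds.mul htanh).mul
          (((tendsto_const_nhds.mul hS).div_atTop tendsto_id).add tendsto_const_nhds)
    have hval : (-(γ₂*d₂)^2*(γ₂*(1/2) + γ₁*(1/2))
          + 1*((γ₂^2*d₂ - g)*(γ₂*d₂) + 0*(γ₂*d₂))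
          + g*1*(0 + γ₂*d₂)) = (γ₂-γ₁)*(γ₂*d₂)^2/2 := by ring
    rw [hval] at hE
    apply Tendsto.congr' _ hE
    filter_upwards [eventually_gt_atTop (0:ℝ)] with t ht
    exact (Feq' d₁ d₂ g γ₁ γ₂ t hd₁ hd₂ ht).symm
  have hLne : (γ₂-γ₁)*(γ₂*d₂)^2/2 ≠ 0 := by
    apply div_ne_zero _ two_ne_zero
    exact mul_ne_zero hγne (by positivity)
  -- limit of m12 / t
  have hm12 : Tendsto (fun t : ℝ => m12 d₂ g γ₂ t (Λ₁ t) / t) atTop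
      (𝓝 (2*((g + γ₂*(γ₂*d₂))*0 - (γ₂*d₂)*(γ₂*d₂)/1))) := by
    have hev : ∀ᶠ t in atTop,
        2*((g + γ₂*(Λ₁ t))*t⁻¹ - (Λ₁ t)*(Λ₁ t)/Real.tanh (t*d₂))
          = m12 d₂ g γ₂ t (Λ₁ t) / t := by
      filter_upwards [eventually_gt_atTop (0:ℝ),
        htanh2.eventually_ne one_ne_zero] with t ht htt
      rw [m12]
      field_simp
    refine Tendsto.congr' hev ?_
    exact tendsto_const_nhds.mul
      ((((tendsto_const_nhds.add (tendsto_const_nhds.mul hlim1)).mul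
        tendsto_inv_atTop_zero)).sub ((hlim1.mul hlim1).div htanh2 one_ne_zero))
  -- limit of Q
  have hQ : Tendsto (fun t : ℝ => (γ₂*d₂ - Λ₂ t)*(γ₂*d₂ - Λ₃ t)) atTop
      (𝓝 ((γ₂*d₂ - 0)*(γ₂*d₂ - 0))) :=
    (tendsto_const_nhds.sub hlim2).mul (tendsto_const_nhds.sub hlim3)
  -- limit of denominator -2 Λ₁ F
  have hden : Tendsto (fun t : ℝ => -2*(Λ₁ t)*(F t)) atTop
      (𝓝 (-2*(γ₂*d₂)*((γ₂-γ₁)*(γ₂*d₂)^2/2))) :=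
    (tendsto_const_nhds.mul hlim1).mul hFlim
  have hdenne : -2*(γ₂*d₂)*((γ₂-γ₁)*(γ₂*d₂)^2/2) ≠ 0 := by
    apply mul_ne_zero _ hLne
    apply mul_ne_zero (by norm_num) (by positivity)
  -- the slowly varying factor c
  set c : ℝ → ℝ := fun t =>
    (m12 d₂ g γ₂ t (Λ₁ t) / t) * ((γ₂*d₂ - Λ₂ t)*(γ₂*d₂ - Λ₃ t)/(-2*(Λ₁ t)*(F t)))
    with hcdef
  have hc : Tendsto c atTop
      (𝓝 ((2*((g + γ₂*(γ₂*d₂))*0 - (γ₂*d₂)*(γ₂*d₂)/1)) *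
        ((γ₂*d₂ - 0)*(γ₂*d₂ - 0)/(-2*(γ₂*d₂)*((γ₂-γ₁)*(γ₂*d₂)^2/2))))) :=
    hm12.mul (hQ.div hden hdenne)
  have hKval : (2*((g + γ₂*(γ₂*d₂))*0 - (γ₂*d₂)*(γ₂*d₂)/1)) *
      ((γ₂*d₂ - 0)*(γ₂*d₂ - 0)/(-2*(γ₂*d₂)*((γ₂-γ₁)*(γ₂*d₂)^2/2)))
        = 2*(γ₂*d₂)/(γ₂-γ₁) := by
    field_simp
    ring
  rw [hKval] at hc
  -- the diverging factor
  have hbig : Tendsto (fun t : ℝ => t * Real.sinh (t*d₂)) atTop atTop :=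
    Tendsto.atTop_mul_atTop₀ tendsto_id (sinh_atTop' hd₂)
  -- eventual equality of the ratio with c · (t sinh(t d₂))
  have heq : ∀ᶠ t in atTop,
      c t * (t * Real.sinh (t*d₂)) = m12 d₂ g γ₂ t (Λ₁ t) / m11 d₂ γ₂ t (Λ₁ t) := by
    filter_upwards [hroots, eventually_gt_atTop (0:ℝ),
      hlim1.eventually (eventually_gt_nhds (show γ₂*d₂/2 < γ₂*d₂ by linarith)),
      hQ.eventually (eventually_gt_nhds (show (0:ℝ) < (γ₂*d₂ - 0)*(γ₂*d₂ - 0) by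
        simpa using mul_pos hΛs hΛs)),
      hFlim.eventually_ne hLne] with t hrt ht hΛ₁ hQpos hFne
    have hΛ₁pos : 0 < Λ₁ t := lt_trans (by positivity) hΛ₁
    have hφ : phi d₁ d₂ g γ₁ γ₂ t (γ₂*d₂)
        = (γ₂*d₂ - Λ₁ t) * (γ₂*d₂ - Λ₂ t) * (γ₂*d₂ - Λ₃ t) := hrt.2.2 (γ₂*d₂)
    have hFt : F t = t * ((γ₂*d₂ - Λ₁ t) * ((γ₂*d₂ - Λ₂ t) * (γ₂*d₂ - Λ₃ t))) := by
      rw [hFdef]; simp only []; rw [hφ]; ring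
    have hdiff : γ₂*d₂ - Λ₁ t ≠ 0 := by
      intro h
      apply hFne
      rw [hFt, h]; ring
    have hQne : (γ₂*d₂ - Λ₂ t) * (γ₂*d₂ - Λ₃ t) ≠ 0 := hQpos.ne'
    have hsinh : (0:ℝ) < Real.sinh (t*d₂) := Real.sinh_pos_iff.2 (by positivity)
    rw [hcdef]
    simp only []
    rw [m11, hFt]
    generalize (γ₂*d₂ - Λ₂ t) * (γ₂*d₂ - Λ₃ t) = Q at hQne ⊢
    field_simp
  constructor
  · intro h
    have hKpos : 0 < 2*(γ₂*d₂)/(γ₂-γ₁) := by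
      apply div_pos (by positivity); linarith
    exact Tendsto.congr' heq (hc.pos_mul_atTop hKpos hbig)
  · intro h
    have hKneg : 2*(γ₂*d₂)/(γ₂-γ₁) < 0 := by
      apply div_neg_of_pos_of_neg (by positivity); linarith
    exact Tendsto.congr' heq (hc.neg_mul_atTop hKneg hbig)
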